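/- Let W be a set of allowed diagrams in a relational coloring language L, and suppose ER(∅; W) = α + k where α is a limit ordinal and k < ω. Then there is w̄ ∈ W^k such that ER(w̄; W) = α. Moreover, there is a family of pairwise disjoint sets {S_i ⊆ (W_{{w̄}})^{k+1} : i < cf(α)} such that ER(∅; W_{S_i}) = α + k for every i < cf(α). -/

import Mathlib

universe u v

open Cardinal

/-- A relational coloring language: a family of pairwise disjoint nonempty sets `R_n`
(`n ≥ 1`) of `n`-ary colors, encoded as a type of colors together with an arity map
whose fibers over `n ≥ 1` are all nonempty. -/
structure ColoringLanguage : Type (u + 1) where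
  Color : Type u
  arity : Color → ℕ
  arity_pos : ∀ r, 1 ≤ arity r
  exists_arity : ∀ n : ℕ, 1 ≤ n → ∃ r, arity r = n

namespace ColoringLanguage

variable (L : ColoringLanguage.{u})

/-- A diagram is (encoded as) a list of colors whose `i`-th entry (0-based) is an
`(i+1)`-ary color; it represents the function `w : [n] → R` with `w(k) ∈ R_k`. -/
def IsDiagram (l : List L.Color) : Prop :=
  ∀ (i : ℕ) (h : i < l.length), L.arity l[i] = i + 1

/-- A set of allowed diagrams: a nonempty set of diagrams closed under restriction to
initial segments. -/
def IsAllowed (W : Set (List L.Color)) : Prop :=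
  W.Nonempty ∧ (∀ l ∈ W, L.IsDiagram l) ∧ ∀ l ∈ W, ∀ m : ℕ, l.take m ∈ W

end ColoringLanguage

/-- `ERge W γ l` says that the existence rank of `l` with respect to `W` is `≥ γ`:
`ER(l;W) ≥ β + 1` iff some one-step extension `l' ∈ W` of `l` has `ER(l';W) ≥ β`,
with the limit (and zero) clauses as usual. -/
noncomputable def ERge {C : Type v} (W : Set (List C)) : Ordinal.{u} → List C → Prop :=
  WellFounded.fix Ordinal.lt_wf fun α IH l =>
    ∀ β, ∀ h : β < α,
      ∃ l' ∈ W, l'.length = l.length + 1 ∧ l'.take l.length = l ∧ IH β h l'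

/-- `prunedW W S` is `W_S`, the set of elements of `W` comparable with some element of `S`. -/
def prunedW {C : Type v} (W S : Set (List C)) : Set (List C) :=
  {w ∈ W | ∃ u ∈ S, w <+: u ∨ u <+: w}

/-- `quotW W wbar` is `W / w̄`: the set of diagrams `w / w̄` for `w ∈ W` extending `w̄`. -/
def quotW {C : Type v} (W : Set (List C)) (wbar : List C) : Set (List C) :=
  (fun l => l.drop wbar.length) '' {l ∈ W | wbar <+: l}

/-- The beth function with base `κ`: `ℶ_0(κ) = κ`, `ℶ_{α+1}(κ) = 2 ^ ℶ_α(κ)`,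
and suprema at limits. -/
noncomputable def bethF (κ : Cardinal.{u}) (o : Ordinal.{u}) : Cardinal.{u} :=
  Ordinal.limitRecOn o κ (fun _ ih => 2 ^ ih)
    fun o' _ ih => ⨆ b : Set.Iio o', ih b.1 b.2

/-- The cardinals `κ_α`: `κ_α = α` for finite `α`, suprema at limits, and
`κ_{β+1} = 2 ^ κ_β` for `β ≥ ω`. -/
noncomputable def kappaC (o : Ordinal.{u}) : Cardinal.{u} :=
  Ordinal.limitRecOn o 0
    (fun o' ih => if o' < Ordinal.omega0 then ih + 1 else 2 ^ ih)
    fun o' _ ih => ⨆ b : Set.Iio o', ih b.1 b.2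

namespace ColoringLanguage

variable (L : ColoringLanguage.{u}) {σ τ : Type u}

/-- `c` is an `L`-coloring of the set `M`: every finite nonempty `A ⊆ M` gets a color
of arity `|A|`. (Values of `c` outside of `M` are irrelevant.) -/
def IsColoring (M : Set σ) (c : Finset σ → L.Color) : Prop :=
  ∀ A : Finset σ, ↑A ⊆ M → A.Nonempty → L.arity (c A) = A.card

/-- `B` is monochromatic for `c`: any two finite nonempty subsets of `B` of equal size
get the same color. -/
def Mono (c : Finset σ → L.Color) (B : Set σ) : Prop :=
  ∀ A₁ A₂ : Finset σ, ↑A₁ ⊆ B → ↑A₂ ⊆ B → A₁.Nonempty → A₁.card = A₂.card → c A₁ = c A₂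

/-- `l` is the diagram of the (monochromatic) finite set `B` under `c`. -/
def DiagramOf (c : Finset σ → L.Color) (B : Finset σ) (l : List L.Color) : Prop :=
  l.length = B.card ∧ ∀ A : Finset σ, A ⊆ B → A.Nonempty → l[A.card - 1]? = some (c A)

/-- `(M,c)` is a member of the coloring class `K(W)`: `c` is an `L`-coloring of `M`
and every finite nonempty monochromatic subset of `M` has its diagram in `W`. -/
def MemK (W : Set (List L.Color)) (M : Set σ) (c : Finset σ → L.Color) : Prop :=
  L.IsColoring M c ∧
    ∀ B : Finset σ, ↑B ⊆ M → B.Nonempty → L.Mono c ↑B → ∃ l ∈ W, L.DiagramOf c B l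

/-- `(M,c)` is a substructure of `(N,c')`. -/
def Substruct (M : Set σ) (c : Finset σ → L.Color) (N : Set σ)
    (c' : Finset σ → L.Color) : Prop :=
  M ⊆ N ∧ ∀ A : Finset σ, ↑A ⊆ M → A.Nonempty → c A = c' A

/-- `f` is an embedding of `(M,c)` into `(N,c')`. -/
def Emb (f : σ → τ) (M : Set σ) (c : Finset σ → L.Color) (N : Set τ)
    (c' : Finset τ → L.Color) : Prop :=
  Set.InjOn f M ∧ f '' M ⊆ N ∧
    ∀ A : Finset σ, ↑A ⊆ M → A.Nonempty →
      haveI := Classical.decEq τ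
      c' (A.image f) = c A

/-- `K(W)` has the amalgamation property for models of size `lam`. -/
def HasAPAt (W : Set (List L.Color)) (lam : Cardinal.{u}) : Prop :=
  ∀ (σ : Type u) (M₀ M₁ M₂ : Set σ) (c₀ c₁ c₂ : Finset σ → L.Color),
    L.MemK W M₀ c₀ → L.MemK W M₁ c₁ → L.MemK W M₂ c₂ →
    Cardinal.mk ↥M₀ = lam → Cardinal.mk ↥M₁ = lam → Cardinal.mk ↥M₂ = lam →
    L.Substruct M₀ c₀ M₁ c₁ → L.Substruct M₀ c₀ M₂ c₂ →
    ∃ (τ : Type u) (N : Set τ) (c : Finset τ → L.Color) (f₁ f₂ : σ → τ),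
      L.MemK W N c ∧ L.Emb f₁ M₁ c₁ N c ∧ L.Emb f₂ M₂ c₂ N c ∧
      ∀ x ∈ M₀, f₁ x = f₂ x

/-- `K(W)` has the disjoint amalgamation property for models of size `lam`. -/
def HasDAPAt (W : Set (List L.Color)) (lam : Cardinal.{u}) : Prop :=
  ∀ (σ : Type u) (M₀ M₁ M₂ : Set σ) (c₀ c₁ c₂ : Finset σ → L.Color),
    L.MemK W M₀ c₀ → L.MemK W M₁ c₁ → L.MemK W M₂ c₂ →
    Cardinal.mk ↥M₀ = lam → Cardinal.mk ↥M₁ = lam → Cardinal.mk ↥M₂ = lam →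
    L.Substruct M₀ c₀ M₁ c₁ → L.Substruct M₀ c₀ M₂ c₂ →
    ∃ (τ : Type u) (N : Set τ) (c : Finset τ → L.Color) (f₁ f₂ : σ → τ),
      L.MemK W N c ∧ L.Emb f₁ M₁ c₁ N c ∧ L.Emb f₂ M₂ c₂ N c ∧
      (∀ x ∈ M₀, f₁ x = f₂ x) ∧ f₁ '' M₁ ∩ f₂ '' M₂ = f₁ '' M₀

end ColoringLanguage

section ERgeLemmas

theorem ERge_iff {C : Type v} (W : Set (List C)) (γ : Ordinal.{u}) (l : List C) :
    ERge W γ l ↔ ∀ β < γ, ∃ l' ∈ W, l'.length = l.length + 1 ∧ l'.take l.length = l ∧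
      ERge W β l' := by
  unfold ERge
  rw [WellFounded.fix_eq]

theorem ERge_mono {C : Type v} {W : Set (List C)} {γ γ' : Ordinal.{u}} {l : List C}
    (h : ERge W γ l) (hle : γ' ≤ γ) : ERge W γ' l := by
  rw [ERge_iff] at h ⊢
  exact fun β hβ => h β (hβ.trans_le hle)

theorem ERge_succ_intro {C : Type v} {W : Set (List C)} {γ : Ordinal.{u}} {l l' : List C}
    (h1 : l' ∈ W) (h2 : l'.length = l.length + 1) (h3 : l'.take l.length = l)
    (h4 : ERge W γ l') : ERge W (γ + 1) l := by
  rw [ERge_iff]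
  intro β hβ
  exact ⟨l', h1, h2, h3, ERge_mono h4 (Order.lt_add_one_iff.1 hβ)⟩

theorem ERge_succ_elim {C : Type v} {W : Set (List C)} {γ : Ordinal.{u}} {l : List C}
    (h : ERge W (γ + 1) l) :
    ∃ l' ∈ W, l'.length = l.length + 1 ∧ l'.take l.length = l ∧ ERge W γ l' :=
  (ERge_iff W _ l).1 h γ (Order.lt_add_one_iff.2 le_rfl)

theorem ERge_of_succ_lt {C : Type v} {W : Set (List C)} {γ : Ordinal.{u}} {l : List C}
    (h : ∀ β < γ, ERge W (β + 1) l) : ERge W γ l := by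
  rw [ERge_iff]
  intro β hβ
  exact ERge_succ_elim (h β hβ)

theorem ERge_subset {C : Type v} {W W' : Set (List C)} (hsub : W' ⊆ W) {γ : Ordinal.{u}}
    {l : List C} (h : ERge W' γ l) : ERge W γ l := by
  induction γ using Ordinal.induction generalizing l with
  | h γ IH =>
    rw [ERge_iff] at h ⊢
    intro β hβ
    obtain ⟨l', h1, h2, h3, h4⟩ := h β hβ
    exact ⟨l', hsub h1, h2, h3, IH β hβ h4⟩

/-- The existence rank of `l` in `W` (meaningful when `ERge` fails somewhere). -/
noncomputable def erank {C : Type v} (W : Set (List C)) (l : List C) : Ordinal.{u} :=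
  sInf {γ | ¬ ERge W (γ + 1) l}

theorem erank_spec {C : Type v} {W : Set (List C)} {l : List C} {γ₀ : Ordinal.{u}}
    (h : ¬ ERge W γ₀ l) :
    ERge W (erank.{u} W l) l ∧ ¬ ERge W (erank.{u} W l + 1) l ∧ erank.{u} W l < γ₀ := by
  have hex : ∃ β < γ₀, ¬ ERge W (β + 1) l := by
    by_contra hc
    push_neg at hc
    exact h (ERge_of_succ_lt hc)
  obtain ⟨β, hβγ, hβ⟩ := hex
  set T : Set Ordinal.{u} := {γ | ¬ ERge W (γ + 1) l} with hT
  have hrk : erank W l = sInf T := rfl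
  have hne : T.Nonempty := ⟨β, hβ⟩
  have hmem : sInf T ∈ T := csInf_mem hne
  rw [hrk]
  refine ⟨?_, hmem, lt_of_le_of_lt (csInf_le (OrderBot.bddBelow _) hβ) hβγ⟩
  refine ERge_of_succ_lt fun δ hδ => ?_
  by_contra hδ'
  have hle : sInf T ≤ δ := csInf_le (OrderBot.bddBelow T) (show δ ∈ T from hδ')
  exact absurd hle (not_le.2 hδ)

theorem ERge_step {C : Type v} {W : Set (List C)} {γ : Ordinal.{u}} {l : List C}
    (h1 : ERge W (γ + 1) l) (h2 : ¬ ERge W (γ + 1 + 1) l) :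
    ∃ l' ∈ W, l'.length = l.length + 1 ∧ l'.take l.length = l ∧
      ERge W γ l' ∧ ¬ ERge W (γ + 1) l' := by
  by_contra hc
  push_neg at hc
  obtain ⟨l₀, m1, m2, m3, m4⟩ := ERge_succ_elim h1
  exact h2 (ERge_succ_intro m1 m2 m3 (hc l₀ m1 m2 m3 m4))

theorem ERge_descend {C : Type v} {W : Set (List C)} {α : Ordinal.{u}} :
    ∀ (k : ℕ) (l : List C), l ∈ W → ERge W (α + k) l → ¬ ERge W (α + k + 1) l →
      ∃ w ∈ W, w.length = l.length + k ∧ ERge W α w ∧ ¬ ERge W (α + 1) w := by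
  intro k
  induction k with
  | zero =>
    intro l hl h1 h2
    simp only [Nat.cast_zero, add_zero] at h1 h2
    exact ⟨l, hl, by simp, h1, h2⟩
  | succ k IH =>
    intro l hl h1 h2
    have hcast : α + ((k + 1 : ℕ) : Ordinal.{u}) = (α + k) + 1 := by
      push_cast
      rw [add_assoc]
    rw [hcast] at h1 h2
    obtain ⟨l', m1, m2, m3, m4, m5⟩ := ERge_step h1 h2
    obtain ⟨w, n1, n2, n3, n4⟩ := IH l' m1 m4 m5
    exact ⟨w, n1, by omega, n3, n4⟩

/-- Extensions of a member of `S` keep their rank in the pruned family. -/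
theorem ERge_pruned_up {C : Type v} {W S : Set (List C)} {a : List C} (ha : a ∈ S)
    {γ : Ordinal.{u}} : ∀ l : List C, a <+: l → ERge W γ l → ERge (prunedW W S) γ l := by
  induction γ using Ordinal.induction with
  | h γ IH =>
    intro l hpre h
    rw [ERge_iff] at h ⊢
    intro β hβ
    obtain ⟨l', h1, h2, h3, h4⟩ := h β hβ
    have hpre' : a <+: l' := hpre.trans (h3 ▸ List.take_prefix l.length l')
    exact ⟨l', ⟨h1, a, ha, Or.inr hpre'⟩, h2, h3, IH β hβ l' hpre' h4⟩

noncomputable def seqR (R : Set Ordinal.{u}) (f : Ordinal.{u} → Ordinal.{u}) :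
    Ordinal.{u} → Ordinal.{u} :=
  WellFounded.fix Ordinal.lt_wf fun b IH =>
    sInf {γ | γ ∈ R ∧ f b ≤ γ ∧ ∀ b' (h : b' < b), IH b' h < γ}

theorem seqR_def (R : Set Ordinal.{u}) (f : Ordinal.{u} → Ordinal.{u}) (b : Ordinal.{u}) :
    seqR R f b = sInf {γ | γ ∈ R ∧ f b ≤ γ ∧ ∀ b' < b, seqR R f b' < γ} := by
  unfold seqR
  rw [WellFounded.fix_eq]

theorem seqR_spec {α : Ordinal.{u}} (hα : Order.IsSuccLimit α) (R : Set Ordinal.{u})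
    (hR : R ⊆ Set.Iio α) (hub : ∀ δ < α, ∃ γ ∈ R, δ ≤ γ)
    (f : Ordinal.{u} → Ordinal.{u}) (hf : ∀ b < α.cof.ord, f b < α) :
    ∀ b < α.cof.ord, seqR R f b ∈ R ∧ f b ≤ seqR R f b ∧
      ∀ b' < b, seqR R f b' < seqR R f b := by
  intro b
  induction b using Ordinal.induction with
  | h b IH =>
  intro hb
  have hcard : b.card < α.cof := Cardinal.lt_ord.1 hb
  have hprev : ∀ b' (h : b' < b), seqR R f b' < α := fun b' h =>
    hR (IH b' h (h.trans hb)).1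
  have hbsup : Ordinal.bsup.{u, u} b (fun b' h => seqR R f b' + 1) < α :=
    Ordinal.bsup_lt_ord hcard fun i hi => by
      rw [Ordinal.add_one_eq_succ]
      exact hα.succ_lt (hprev i hi)
  obtain ⟨γ, hγR, hγge⟩ := hub _ (max_lt hbsup (hf b hb))
  have hγT : γ ∈ {γ | γ ∈ R ∧ f b ≤ γ ∧ ∀ b' < b, seqR R f b' < γ} := by
    refine ⟨hγR, le_trans (le_max_right _ _) hγge, fun b' h => ?_⟩
    calc seqR R f b' < seqR R f b' + 1 := Order.lt_add_one_iff.2 le_rfl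
    _ ≤ Ordinal.bsup.{u, u} b (fun b' h => seqR R f b' + 1) := Ordinal.le_bsup _ b' h
    _ ≤ γ := le_trans (le_max_left _ _) hγge
  rw [seqR_def]
  exact csInf_mem ⟨γ, hγT⟩

/-- The main chain computation: if `wb ∈ W` has length `k`, rank less than `α + 1`,
and `Si` is a set of one-step extensions of `wb` in `W` whose ranks are cofinal below
`α`, then the pruned family `W_{Si}` has `ER(∅) = α + k`. -/
theorem pruned_chain {C : Type v} {W : Set (List C)}
    (hWt : ∀ l ∈ W, ∀ m : ℕ, l.take m ∈ W) {α : Ordinal.{u}} {k : ℕ} {wb : List C}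
    (hwb : wb ∈ W) (hlen : wb.length = k) (hneg : ¬ ERge W (α + 1) wb)
    (Si : Set (List C)) (hSi : Si ⊆ {u | u ∈ W ∧ u.length = k + 1 ∧ u.take k = wb})
    (hSne : Si.Nonempty) (hcof : ∀ δ < α, ∃ u ∈ Si, ERge W δ u) :
    ERge (prunedW W Si) (α + k) ([] : List C) ∧
      ¬ ERge (prunedW W Si) (α + k + 1) ([] : List C) := by
  have hVsub : prunedW W Si ⊆ W := fun l hl => hl.1
  obtain ⟨u₀, hu₀⟩ := hSne
  -- wb-level facts
  have h2 : ERge (prunedW W Si) α wb := by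
    rw [ERge_iff]
    intro β hβ
    obtain ⟨u, huS, huER⟩ := hcof β hβ
    obtain ⟨huW, hulen, hutake⟩ := hSi huS
    refine ⟨u, ⟨huW, u, huS, Or.inl (List.prefix_refl u)⟩, by rw [hulen, hlen],
      by rw [hlen]; exact hutake, ERge_pruned_up huS u (List.prefix_refl u) huER⟩
  have h3 : ¬ ERge (prunedW W Si) (α + 1) wb := fun h => hneg (ERge_subset hVsub h)
  -- the chain
  have hchain : ∀ d : ℕ, d ≤ k →
      ERge (prunedW W Si) (α + d) (wb.take (k - d)) ∧
        ¬ ERge (prunedW W Si) (α + d + 1) (wb.take (k - d)) := by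
    intro d
    induction d with
    | zero =>
      intro _
      have : wb.take (k - 0) = wb := by
        rw [Nat.sub_zero, ← hlen, List.take_length]
      rw [this]
      simpa using ⟨h2, h3⟩
    | succ d IH =>
      intro hdk
      obtain ⟨IH1, IH2⟩ := IH (by omega)
      set j := k - (d + 1) with hj
      have hjd : k - d = j + 1 := by omega
      have hjk : j + 1 ≤ k := by omega
      have hcast : α + ((d + 1 : ℕ) : Ordinal.{u}) = (α + d) + 1 := by
        push_cast
        rw [add_assoc]
      have hlentj : (wb.take j).length = j := by
        rw [List.length_take, hlen]; omega
      have hlentj1 : (wb.take (j + 1)).length = j + 1 := by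
        rw [List.length_take, hlen]; omega
      have htp : wb.take (j + 1) ∈ prunedW W Si := by
        refine ⟨hWt wb hwb (j + 1), u₀, hu₀, Or.inl ?_⟩
        exact (List.take_prefix (j + 1) wb).trans ((hSi hu₀).2.2 ▸ List.take_prefix k u₀)
      have htt : (wb.take (j + 1)).take (wb.take j).length = wb.take j := by
        rw [hlentj, List.take_take, min_eq_left (by omega)]
      constructor
      · rw [hcast]
        refine ERge_succ_intro htp (by rw [hlentj1, hlentj]) htt ?_
        rw [hjd] at IH1
        exact IH1
      · intro hcon
        rw [hcast] at hcon
        obtain ⟨l', p1, p2, p3, p4⟩ := ERge_succ_elim hcon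
        -- identify l'
        obtain ⟨p1W, u, huS, hcomp⟩ := p1
        obtain ⟨huW, hulen, hutake⟩ := hSi huS
        have hl'len : l'.length = j + 1 := by rw [p2, hlentj]
        have hl'pre : l' <+: u := by
          rcases hcomp with h | h
          · exact h
          · have := h.length_le
            omega
        have hl'eq : l' = wb.take (j + 1) := by
          have := List.prefix_iff_eq_take.1 hl'pre
          rw [hl'len] at this
          rw [this, ← hutake, List.take_take, min_eq_left (by omega)]
        rw [hl'eq, ← hjd] at p4
        exact IH2 p4
  have := hchain k le_rfl
  rwa [Nat.sub_self, List.take_zero] at this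

end ERgeLemmas


/-- if `ER(∅;W) = α + k` with `α` limit and `k < ω`, then there is
`w̄ ∈ W^k` with `ER(w̄;W) = α` and pairwise disjoint sets
`S_i ⊆ (W_{{w̄}})^{k+1}` (`i < cf(α)`) with `ER(∅; W_{S_i}) = α + k`. -/
theorem stmt8 (L : ColoringLanguage.{u}) (W : Set (List L.Color))
    (hW : L.IsAllowed W) (α : Ordinal.{u}) (hα : Order.IsSuccLimit α) (k : ℕ)
    (hER : ERge W (α + (k : Ordinal.{u})) ([] : List L.Color) ∧
      ¬ ERge W (α + (k : Ordinal.{u}) + 1) ([] : List L.Color)) :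
    ∃ wb ∈ W, wb.length = k ∧ (ERge W α wb ∧ ¬ ERge W (α + 1) wb) ∧
      ∃ (ι : Type u) (S : ι → Set (List L.Color)),
        Cardinal.mk ι = α.cof ∧
        (∀ i j : ι, i ≠ j → Disjoint (S i) (S j)) ∧
        ∀ i : ι, S i ⊆ {l ∈ prunedW W {wb} | l.length = k + 1} ∧
          ERge (prunedW W (S i)) (α + (k : Ordinal.{u})) ([] : List L.Color) ∧
          ¬ ERge (prunedW W (S i)) (α + (k : Ordinal.{u}) + 1) ([] : List L.Color) := by
  obtain ⟨hpos, hneg⟩ := hER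
  -- the empty diagram is in W
  obtain ⟨l₀, hl₀⟩ := hW.1
  have hnil : ([] : List L.Color) ∈ W := by
    have := hW.2.2 l₀ hl₀ 0
    simpa using this
  -- Part A: find wb
  obtain ⟨wb, hwbW, hwblen0, hwbpos, hwbneg⟩ := ERge_descend k ([] : List L.Color) hnil hpos hneg
  have hwblen : wb.length = k := by simpa using hwblen0
  refine ⟨wb, hwbW, hwblen, ⟨hwbpos, hwbneg⟩, ?_⟩
  -- cofinality setup
  have hκreg : (α.cof).IsRegular := Cardinal.isRegular_cof hα
  have hκinf : ℵ₀ ≤ α.cof := hκreg.aleph0_le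
  -- extensions of wb and their ranks
  set E : Set (List L.Color) := {u | u ∈ W ∧ u.length = k + 1 ∧ u.take k = wb} with hE
  have hEnotα : ∀ u ∈ E, ¬ ERge W α u := by
    intro u hu hcon
    exact hwbneg (ERge_succ_intro hu.1 (by rw [hu.2.1, hwblen]) (by rw [hwblen]; exact hu.2.2)
      hcon)
  have hrk : ∀ u ∈ E, ERge W (erank.{u} W u) u ∧ ¬ ERge W (erank.{u} W u + 1) u ∧
      erank.{u} W u < α := fun u hu => erank_spec (hEnotα u hu)
  set R : Set Ordinal.{u} := {γ | ∃ u ∈ E, erank.{u} W u = γ} with hR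
  have hRsub : R ⊆ Set.Iio α := by
    rintro γ ⟨u, hu, rfl⟩
    exact (hrk u hu).2.2
  have hRub : ∀ δ < α, ∃ γ ∈ R, δ ≤ γ := by
    intro δ hδ
    obtain ⟨u, m1, m2, m3, m4⟩ := (ERge_iff W α wb).1 hwbpos δ hδ
    have huE : u ∈ E := ⟨m1, by rw [m2, hwblen], by rw [hwblen] at m3; exact m3⟩
    refine ⟨erank.{u} W u, ⟨u, huE, rfl⟩, ?_⟩
    by_contra hlt
    push_neg at hlt
    have : ERge W (erank.{u} W u + 1) u :=
      ERge_mono m4 (Order.add_one_le_iff.2 hlt)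
    exact (hrk u huE).2.1 this
  -- fundamental sequence for α
  obtain ⟨f, hf⟩ := Ordinal.exists_fundamental_sequence α
  set f' : Ordinal.{u} → Ordinal.{u} :=
    fun b => if h : b < α.cof.ord then f b h else 0 with hf'
  have hf'lt : ∀ b < α.cof.ord, f' b < α := by
    intro b hb
    simp only [hf', dif_pos hb]
    exact hf.blsub_eq ▸ Ordinal.lt_blsub.{u, u} f b hb
  have hf'cof : ∀ δ < α, ∃ b < α.cof.ord, δ ≤ f' b := by
    intro δ hδ
    rw [← hf.blsub_eq, Ordinal.lt_blsub_iff.{u, u}] at hδ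
    obtain ⟨b, hb, hble⟩ := hδ
    exact ⟨b, hb, by simp only [hf', dif_pos hb]; exact hble⟩
  have hf'mono : ∀ b₁ b₂ : Ordinal.{u}, b₁ ≤ b₂ → b₂ < α.cof.ord → f' b₁ ≤ f' b₂ := by
    intro b₁ b₂ h12 h2
    rcases eq_or_lt_of_le h12 with rfl | hlt
    · exact le_rfl
    · simp only [hf', dif_pos h2, dif_pos (hlt.trans h2)]
      exact (hf.strict_mono (hlt.trans h2) h2 hlt).le
  -- the strictly increasing sequence of achieved ranks
  set g : Ordinal.{u} → Ordinal.{u} := seqR R f' with hg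
  have hgs := seqR_spec hα R hRsub hRub f' hf'lt
  have hginj : ∀ b₁ < α.cof.ord, ∀ b₂ < α.cof.ord, g b₁ = g b₂ → b₁ = b₂ := by
    intro b₁ h1 b₂ h2 heq
    rcases lt_trichotomy b₁ b₂ with h | h | h
    · exact absurd heq (ne_of_lt ((hgs b₂ h2).2.2 b₁ h))
    · exact h
    · exact absurd heq.symm (ne_of_lt ((hgs b₁ h1).2.2 b₂ h))
  -- index type
  have hmkι : Cardinal.mk (α.cof.ord.ToType) = α.cof := by
    rw [Cardinal.mk_toType, Cardinal.card_ord]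
  have hιne : Nonempty (α.cof.ord.ToType) := by
    rw [Ordinal.toType_nonempty_iff_ne_zero, ne_eq, Cardinal.ord_eq_zero]
    intro h0
    rw [h0] at hκinf
    exact absurd hκinf (by simp [Cardinal.aleph0_pos.not_ge])
  have heprod : Cardinal.mk (α.cof.ord.ToType × α.cof.ord.ToType) = Cardinal.mk (α.cof.ord.ToType) := by
    rw [Cardinal.mk_prod, Cardinal.lift_id]
    exact Cardinal.mul_eq_self (by rw [hmkι]; exact hκinf)
  obtain ⟨e⟩ := Cardinal.eq.1 heprod
  -- the typein function for `α.cof.ord.ToType`, via the enumeration order isomorphism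
  set tin : α.cof.ord.ToType → Ordinal.{u} :=
    fun x => ((Ordinal.ToType.mk (o := α.cof.ord)).symm x).1 with htin
  have htinlt : ∀ x, tin x < α.cof.ord :=
    fun x => ((Ordinal.ToType.mk (o := α.cof.ord)).symm x).2
  have htininj : Function.Injective tin := by
    intro a b h
    have := (Ordinal.ToType.mk (o := α.cof.ord)).symm.injective (Subtype.ext h)
    exact this
  -- unboundedness of each slice
  have hub2 : ∀ i : α.cof.ord.ToType, ∀ b₀ < α.cof.ord, ∃ j : α.cof.ord.ToType,
      b₀ ≤ tin (e (i, j)) := by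
    intro i b₀ hb₀
    by_contra hc
    push_neg at hc
    have hinj : Function.Injective
        (fun j : α.cof.ord.ToType => (⟨tin (e (i, j)), hc j⟩ : Set.Iio b₀)) := by
      intro j₁ j₂ hj
      have h1 : tin (e (i, j₁)) = tin (e (i, j₂)) := by
        simpa using congrArg Subtype.val hj
      have h2 : e (i, j₁) = e (i, j₂) := htininj h1
      exact (Prod.mk.injEq i j₁ i j₂ ▸ e.injective h2).2
    have hcard : Cardinal.lift.{u + 1} (Cardinal.mk (α.cof.ord.ToType)) ≤
        Cardinal.lift.{u} (Cardinal.mk (Set.Iio b₀)) :=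
      Cardinal.lift_mk_le'.2 ⟨⟨_, hinj⟩⟩
    rw [Ordinal.mk_Iio_ordinal, Cardinal.lift_lift, hmkι] at hcard
    have hcard' : α.cof ≤ b₀.card := by
      have := Cardinal.lift_le.1 (le_of_eq_of_le (by rfl) hcard)
      exact Cardinal.lift_le.1 (by exact_mod_cast hcard)
    exact absurd hcard' (not_le.2 (Cardinal.lt_ord.1 hb₀))
  -- the disjoint families
  set S : α.cof.ord.ToType → Set (List L.Color) := fun i =>
    {w ∈ E | ∃ j : α.cof.ord.ToType, erank.{u} W w = g (tin (e (i, j)))} with hS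
  have hSsubE : ∀ i, S i ⊆ E := fun i w hw => hw.1
  have hScof : ∀ i : α.cof.ord.ToType, ∀ δ < α, ∃ w ∈ S i, ERge W δ w := by
    intro i δ hδ
    obtain ⟨b₀, hb₀, hδf⟩ := hf'cof δ hδ
    obtain ⟨j, hj⟩ := hub2 i b₀ hb₀
    have hblt : tin (e (i, j)) < α.cof.ord := htinlt _
    obtain ⟨w, hwE, hwrk⟩ := (hgs _ hblt).1
    refine ⟨w, ⟨hwE, j, hwrk⟩, ?_⟩
    have hδw : δ ≤ erank.{u} W w := by
      rw [hwrk]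
      exact le_trans hδf (le_trans (hf'mono b₀ _ hj hblt) (hgs _ hblt).2.1)
    exact ERge_mono (hrk w hwE).1 hδw
  have hSne : ∀ i : α.cof.ord.ToType, (S i).Nonempty := by
    intro i
    obtain ⟨w, hw, _⟩ := hScof i 0 hα.pos
    exact ⟨w, hw⟩
  have hdisj : ∀ i j : α.cof.ord.ToType, i ≠ j → Disjoint (S i) (S j) := by
    intro i j hij
    rw [Set.disjoint_left]
    rintro w ⟨hwE, j₁, hj₁⟩ ⟨_, j₂, hj₂⟩
    have heq : g (tin (e (i, j₁))) = g (tin (e (j, j₂))) := by rw [← hj₁, ← hj₂]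
    have h1 := hginj _ (htinlt _) _ (htinlt _) heq
    have h2 := htininj h1
    exact hij (congrArg Prod.fst (e.injective h2))
  refine ⟨α.cof.ord.ToType, S, hmkι, hdisj, fun i => ⟨?_, ?_⟩⟩
  · rintro w ⟨⟨hwW, hwlen, hwtake⟩, -⟩
    exact ⟨⟨hwW, wb, Set.mem_singleton wb, Or.inr (hwtake ▸ List.take_prefix k w)⟩, hwlen⟩
  · have := pruned_chain hW.2.2 hwbW hwblen hwbneg (S i)
      (fun w hw => hSsubE i hw) (hSne i) (hScof i)
    exact ⟨this.1, this.2⟩
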